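/- For every r ∈ (0,1), the function m is differentiable at r and its derivative satisfies m'(r) = (π − 4 E'(r) K(r)) / (π r). -/

import Mathlib

open Real Set Filter

/-- Complete elliptic integral of the first kind. -/
noncomputable def K (r : ℝ) : ℝ :=
  ∫ θ in (0:ℝ)..(π/2), 1 / Real.sqrt (1 - r^2 * Real.sin θ ^ 2)

/-- Complete elliptic integral of the second kind. -/
noncomputable def E (r : ℝ) : ℝ :=
  ∫ θ in (0:ℝ)..(π/2), Real.sqrt (1 - r^2 * Real.sin θ ^ 2)

/-- Complementary complete elliptic integral of the first kind: `K'(r) = K(√(1-r²))`. -/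
noncomputable def K' (r : ℝ) : ℝ := K (Real.sqrt (1 - r^2))

/-- Complementary complete elliptic integral of the second kind: `E'(r) = E(√(1-r²))`. -/
noncomputable def E' (r : ℝ) : ℝ := E (Real.sqrt (1 - r^2))

/-- The special function `m(r) = (2/π) r'² K(r) K'(r)` (here `r'² = 1 - r²`). -/
noncomputable def m (r : ℝ) : ℝ := (2/π) * (1 - r^2) * K r * K' r

open MeasureTheory intervalIntegral Topology

lemma delta_ge (r θ : ℝ) : 1 - r^2 ≤ 1 - r^2 * Real.sin θ ^ 2 := by
  have h1 : r^2 * Real.sin θ ^2 ≤ r^2 :=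
    mul_le_of_le_one_right (sq_nonneg r) (Real.sin_sq_le_one θ)
  linarith

lemma delta_pos {r : ℝ} (hr : r^2 < 1) (θ : ℝ) : 0 < 1 - r^2 * Real.sin θ ^ 2 :=
  lt_of_lt_of_le (by linarith) (delta_ge r θ)

lemma cont_delta (r : ℝ) : Continuous fun θ : ℝ => 1 - r^2 * Real.sin θ ^ 2 := by
  continuity

lemma cont_sqrt_delta (r : ℝ) : Continuous fun θ : ℝ => Real.sqrt (1 - r^2 * Real.sin θ ^ 2) :=
  (cont_delta r).sqrt

lemma cont_inv_sqrt_delta {r : ℝ} (hr : r^2 < 1) :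
    Continuous fun θ : ℝ => 1 / Real.sqrt (1 - r^2 * Real.sin θ ^ 2) :=
  continuous_const.div (cont_sqrt_delta r)
    (fun θ => (Real.sqrt_pos.2 (delta_pos hr θ)).ne')

lemma hasDerivAt_sqrt_delta {x s : ℝ} (h : 0 < 1 - x^2 * s^2) :
    HasDerivAt (fun x : ℝ => Real.sqrt (1 - x^2 * s^2))
      (-(x * s^2) / Real.sqrt (1 - x^2 * s^2)) x := by
  have hu : HasDerivAt (fun x : ℝ => 1 - x^2 * s^2) (-(2*x*s^2)) x := by
    simpa using (((hasDerivAt_pow 2 x).mul_const (s^2)).const_sub 1)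
  have := hu.sqrt h.ne'
  convert this using 1
  have hs : Real.sqrt (1 - x^2 * s^2) ≠ 0 := (Real.sqrt_pos.2 h).ne'
  field_simp

lemma hasDerivAt_inv_sqrt_delta {x s : ℝ} (h : 0 < 1 - x^2 * s^2) :
    HasDerivAt (fun x : ℝ => 1 / Real.sqrt (1 - x^2 * s^2))
      (x * s^2 / ((1 - x^2 * s^2) * Real.sqrt (1 - x^2 * s^2))) x := by
  have hs : 0 < Real.sqrt (1 - x^2 * s^2) := Real.sqrt_pos.2 h
  have h1 := (hasDerivAt_sqrt_delta (s := s) h).inv hs.ne'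
  simp only [one_div]
  refine h1.congr_deriv ?_
  symm
  rw [Real.sq_sqrt h.le]
  have h2 := hs.ne'
  have h3 := h.ne'
  field_simp

lemma ball_sq_lt {r : ℝ} (hr : r ∈ Set.Ioo (0:ℝ) 1) {x : ℝ}
    (hx : x ∈ Metric.ball r ((1-r)/2)) : x^2 ≤ ((1+r)/2)^2 ∧ ((1+r)/2)^2 < 1 := by
  obtain ⟨hr0, hr1⟩ := hr
  rw [Metric.mem_ball, Real.dist_eq, abs_lt] at hx
  constructor
  · apply sq_le_sq'
    · nlinarith [hx.1, hx.2]
    · nlinarith [hx.1, hx.2]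
  · nlinarith

lemma hasDerivAt_K_raw {r : ℝ} (hr : r ∈ Set.Ioo (0:ℝ) 1) :
    HasDerivAt K (∫ θ in (0:ℝ)..(π/2),
      r * Real.sin θ ^ 2 /
        ((1 - r^2 * Real.sin θ ^2) * Real.sqrt (1 - r^2 * Real.sin θ ^2))) r := by
  obtain ⟨hr0, hr1⟩ := hr
  set b : ℝ := (1+r)/2 with hb
  have hb1 : b^2 < 1 := by rw [hb]; nlinarith
  have hbpos : 0 < 1 - b^2 := by linarith
  have hrsq : r^2 < 1 := by nlinarith
  have hε : (0:ℝ) < (1-r)/2 := by linarith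
  have key := intervalIntegral.hasDerivAt_integral_of_dominated_loc_of_deriv_le
    (F := fun x θ => 1 / Real.sqrt (1 - x^2 * Real.sin θ ^ 2))
    (F' := fun x θ => x * Real.sin θ ^ 2 /
        ((1 - x^2 * Real.sin θ ^2) * Real.sqrt (1 - x^2 * Real.sin θ ^2)))
    (x₀ := r) (a := 0) (b := π/2) (μ := volume)
    (bound := fun _ => b / ((1 - b^2) * Real.sqrt (1 - b^2)))
    (Metric.ball_mem_nhds r hε) ?_ ?_ ?_ ?_ ?_ ?_
  · exact key.2
  · -- measurability eventually
    filter_upwards [Metric.ball_mem_nhds r hε] with x hx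
    have hx2 : x^2 < 1 := lt_of_le_of_lt (ball_sq_lt ⟨hr0, hr1⟩ hx).1 hb1
    exact (cont_inv_sqrt_delta hx2).aestronglyMeasurable
  · exact (cont_inv_sqrt_delta hrsq).intervalIntegrable _ _
  · exact (((continuous_const.mul ((Real.continuous_sin).pow 2)).div
      ((cont_delta r).mul (cont_sqrt_delta r))
      (fun θ => (mul_pos (delta_pos hrsq θ) (Real.sqrt_pos.2 (delta_pos hrsq θ))).ne'))).aestronglyMeasurable
  · -- bound
    refine ae_of_all _ (fun θ _ x hx => ?_)
    obtain ⟨hxb, _⟩ := ball_sq_lt ⟨hr0, hr1⟩ hx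
    have hx2 : x^2 < 1 := lt_of_le_of_lt hxb hb1
    have hΔ : 0 < 1 - x^2 * Real.sin θ ^2 := delta_pos hx2 θ
    have hxb2 : x ^ 2 ≤ b ^ 2 := hxb
    have hΔb : 1 - b^2 ≤ 1 - x^2 * Real.sin θ ^2 :=
      le_trans (by linarith : 1 - b^2 ≤ 1 - x^2) (delta_ge x θ)
    have hbnn : (0:ℝ) ≤ b := by rw [hb]; linarith
    have hxabs : |x| ≤ b := by
      rw [← Real.sqrt_sq_eq_abs, ← Real.sqrt_sq hbnn]
      exact Real.sqrt_le_sqrt hxb2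
    have hnum : |x * Real.sin θ ^2| ≤ b := by
      rw [abs_mul]
      calc |x| * |Real.sin θ ^2| ≤ b * 1 := by
            apply mul_le_mul hxabs _ (abs_nonneg _) (by positivity)
            rw [abs_of_nonneg (sq_nonneg _)]
            exact Real.sin_sq_le_one θ
        _ = b := mul_one b
    rw [Real.norm_eq_abs, abs_div]
    have hden : (1-b^2) * Real.sqrt (1-b^2) ≤
        |( 1 - x^2 * Real.sin θ ^2) * Real.sqrt (1 - x^2 * Real.sin θ ^2)| := by
      rw [abs_of_pos (mul_pos hΔ (Real.sqrt_pos.2 hΔ))]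
      exact mul_le_mul hΔb (Real.sqrt_le_sqrt hΔb) (Real.sqrt_nonneg _) hΔ.le
    exact div_le_div₀ (by positivity) hnum (by positivity) hden
  · exact intervalIntegrable_const
  · -- differentiability
    refine ae_of_all _ (fun θ _ x hx => ?_)
    have hx2 : x^2 < 1 := lt_of_le_of_lt (ball_sq_lt ⟨hr0, hr1⟩ hx).1 hb1
    exact hasDerivAt_inv_sqrt_delta (delta_pos hx2 θ)

lemma hasDerivAt_E_raw {r : ℝ} (hr : r ∈ Set.Ioo (0:ℝ) 1) :
    HasDerivAt E (∫ θ in (0:ℝ)..(π/2),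
      -(r * Real.sin θ ^ 2) / Real.sqrt (1 - r^2 * Real.sin θ ^2)) r := by
  obtain ⟨hr0, hr1⟩ := hr
  set b : ℝ := (1+r)/2 with hb
  have hb1 : b^2 < 1 := by rw [hb]; nlinarith
  have hbpos : 0 < 1 - b^2 := by linarith
  have hrsq : r^2 < 1 := by nlinarith
  have hε : (0:ℝ) < (1-r)/2 := by linarith
  have key := intervalIntegral.hasDerivAt_integral_of_dominated_loc_of_deriv_le
    (F := fun x θ => Real.sqrt (1 - x^2 * Real.sin θ ^ 2))
    (F' := fun x θ => -(x * Real.sin θ ^ 2) / Real.sqrt (1 - x^2 * Real.sin θ ^2))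
    (x₀ := r) (a := 0) (b := π/2) (μ := volume)
    (bound := fun _ => b / Real.sqrt (1 - b^2))
    (Metric.ball_mem_nhds r hε) ?_ ?_ ?_ ?_ ?_ ?_
  · exact key.2
  · filter_upwards [Metric.ball_mem_nhds r hε] with x hx
    exact (cont_sqrt_delta x).aestronglyMeasurable
  · exact (cont_sqrt_delta r).intervalIntegrable _ _
  · exact ((continuous_const.mul ((Real.continuous_sin).pow 2)).neg.div
      (cont_sqrt_delta r)
      (fun θ => (Real.sqrt_pos.2 (delta_pos hrsq θ)).ne')).aestronglyMeasurable
  · refine ae_of_all _ (fun θ _ x hx => ?_)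
    obtain ⟨hxb, _⟩ := ball_sq_lt ⟨hr0, hr1⟩ hx
    have hx2 : x^2 < 1 := lt_of_le_of_lt hxb hb1
    have hΔ : 0 < 1 - x^2 * Real.sin θ ^2 := delta_pos hx2 θ
    have hxb2 : x ^ 2 ≤ b ^ 2 := hxb
    have hΔb : 1 - b^2 ≤ 1 - x^2 * Real.sin θ ^2 :=
      le_trans (by linarith : 1 - b^2 ≤ 1 - x^2) (delta_ge x θ)
    have hbnn : (0:ℝ) ≤ b := by rw [hb]; linarith
    have hxabs : |x| ≤ b := by
      rw [← Real.sqrt_sq_eq_abs, ← Real.sqrt_sq hbnn]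
      exact Real.sqrt_le_sqrt hxb2
    have hnum : |(-(x * Real.sin θ ^2))| ≤ b := by
      rw [abs_neg, abs_mul]
      calc |x| * |Real.sin θ ^2| ≤ b * 1 := by
            apply mul_le_mul hxabs _ (abs_nonneg _) hbnn
            rw [abs_of_nonneg (sq_nonneg _)]
            exact Real.sin_sq_le_one θ
        _ = b := mul_one b
    rw [Real.norm_eq_abs, abs_div]
    have hden : Real.sqrt (1-b^2) ≤ |Real.sqrt (1 - x^2 * Real.sin θ ^2)| := by
      rw [abs_of_pos (Real.sqrt_pos.2 hΔ)]
      exact Real.sqrt_le_sqrt hΔb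
    exact div_le_div₀ (by positivity) hnum (by positivity) hden
  · exact intervalIntegrable_const
  · refine ae_of_all _ (fun θ _ x hx => ?_)
    have hx2 : x^2 < 1 := lt_of_le_of_lt (ball_sq_lt ⟨hr0, hr1⟩ hx).1 hb1
    exact hasDerivAt_sqrt_delta (delta_pos hx2 θ)

-- pointwise derivative of g(θ) = sin θ cos θ / √Δ
lemma hasDerivAt_g {r : ℝ} (hrsq : r^2 < 1) (hr0 : r ≠ 0) (θ : ℝ) :
    HasDerivAt (fun θ : ℝ => Real.sin θ * Real.cos θ / Real.sqrt (1 - r^2 * Real.sin θ ^ 2))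
      (Real.sqrt (1 - r^2 * Real.sin θ ^2) / r^2 -
        (1 - r^2) / (r^2 * ((1 - r^2 * Real.sin θ ^2) * Real.sqrt (1 - r^2 * Real.sin θ ^2)))) θ := by
  have hΔ : 0 < 1 - r^2 * Real.sin θ ^2 := delta_pos hrsq θ
  have hq : 0 < Real.sqrt (1 - r^2 * Real.sin θ ^2) := Real.sqrt_pos.2 hΔ
  have hnum : HasDerivAt (fun θ : ℝ => Real.sin θ * Real.cos θ)
      (Real.cos θ ^ 2 - Real.sin θ ^ 2) θ := by
    have := (Real.hasDerivAt_sin θ).mul (Real.hasDerivAt_cos θ)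
    refine this.congr_deriv ?_; ring
  have hu : HasDerivAt (fun θ : ℝ => 1 - r^2 * Real.sin θ ^ 2)
      (-(r^2 * (2 * Real.sin θ * Real.cos θ))) θ := by
    have hs2 : HasDerivAt (fun θ : ℝ => Real.sin θ ^ 2) (2 * Real.sin θ * Real.cos θ) θ := by
      have := ((Real.hasDerivAt_sin θ)).pow 2
      refine this.congr_deriv ?_; ring
    simpa using (hs2.const_mul (r^2)).const_sub 1
  have hden : HasDerivAt (fun θ : ℝ => Real.sqrt (1 - r^2 * Real.sin θ ^ 2))
      (-(r^2 * (2 * Real.sin θ * Real.cos θ)) / (2 * Real.sqrt (1 - r^2 * Real.sin θ ^2))) θ :=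
    hu.sqrt hΔ.ne'
  have H := hnum.div hden hq.ne'
  refine H.congr_deriv ?_
  symm
  have hc : Real.cos θ ^ 2 = 1 - Real.sin θ ^ 2 := Real.cos_sq' θ
  have hΔne := hΔ.ne'
  have hqne := hq.ne'
  have hr2 : (r:ℝ)^2 ≠ 0 := pow_ne_zero 2 hr0
  set q := Real.sqrt (1 - r^2 * Real.sin θ ^2) with hqdef
  have hq2 : q^2 = 1 - r^2 * Real.sin θ ^2 := Real.sq_sqrt hΔ.le
  set s := Real.sin θ
  set c := Real.cos θ
  field_simp
  linear_combination (r^2 - r^2*s^2 - r^2*c^2 + r^4*s^2*c^2 + q^2 - q^2*r^2*s^2) * hq2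
    + (-r^2 + r^4*s^2) * hc

lemma cont_d32 {r : ℝ} (hr : r^2 < 1) :
    Continuous fun θ : ℝ =>
      1 / ((1 - r^2 * Real.sin θ ^ 2) * Real.sqrt (1 - r^2 * Real.sin θ ^ 2)) :=
  continuous_const.div ((cont_delta r).mul (cont_sqrt_delta r))
    (fun θ => (mul_pos (delta_pos hr θ) (Real.sqrt_pos.2 (delta_pos hr θ))).ne')

lemma integral_d32 {r : ℝ} (hr : r ∈ Set.Ioo (0:ℝ) 1) :
    (∫ θ in (0:ℝ)..(π/2),
      1 / ((1 - r^2 * Real.sin θ ^2) * Real.sqrt (1 - r^2 * Real.sin θ ^2)))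
      = E r / (1 - r^2) := by
  obtain ⟨hr0, hr1⟩ := hr
  have hrsq : r^2 < 1 := by nlinarith
  have hr2 : (1:ℝ) - r^2 ≠ 0 := by nlinarith
  have hrne : r ≠ 0 := ne_of_gt hr0
  have hr2' : (r:ℝ)^2 ≠ 0 := pow_ne_zero 2 hrne
  have hFTC := intervalIntegral.integral_eq_sub_of_hasDerivAt
    (f := fun θ : ℝ => Real.sin θ * Real.cos θ / Real.sqrt (1 - r^2 * Real.sin θ ^ 2))
    (f' := fun θ : ℝ => Real.sqrt (1 - r^2 * Real.sin θ ^2) / r^2 -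
        (1 - r^2) / (r^2 * ((1 - r^2 * Real.sin θ ^2) * Real.sqrt (1 - r^2 * Real.sin θ ^2))))
    (a := 0) (b := π/2)
    (fun θ _ => hasDerivAt_g hrsq hrne θ) ?_
  · have hval : (fun θ : ℝ => Real.sin θ * Real.cos θ / Real.sqrt (1 - r^2 * Real.sin θ ^ 2)) (π/2)
        - (fun θ : ℝ => Real.sin θ * Real.cos θ / Real.sqrt (1 - r^2 * Real.sin θ ^ 2)) 0 = 0 := by
      simp [Real.cos_pi_div_two, Real.sin_zero]
    rw [hval] at hFTC
    have hsplit : (∫ θ in (0:ℝ)..(π/2), (Real.sqrt (1 - r^2 * Real.sin θ ^2) / r^2 -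
        (1 - r^2) / (r^2 * ((1 - r^2 * Real.sin θ ^2) * Real.sqrt (1 - r^2 * Real.sin θ ^2)))))
        = (∫ θ in (0:ℝ)..(π/2), Real.sqrt (1 - r^2 * Real.sin θ ^2)) / r^2 -
          ((1 - r^2)/r^2) * ∫ θ in (0:ℝ)..(π/2),
            1 / ((1 - r^2 * Real.sin θ ^2) * Real.sqrt (1 - r^2 * Real.sin θ ^2)) := by
    
      rw [intervalIntegral.integral_sub]
      · congr 1
        · rw [intervalIntegral.integral_div]
        · rw [← intervalIntegral.integral_const_mul]
          apply intervalIntegral.integral_congr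
          intro θ _
          simp only [div_mul_div_comm, mul_one]
      · exact ((cont_sqrt_delta r).div_const _).intervalIntegrable _ _
      · exact (continuous_const.div
          ((continuous_const.mul ((cont_delta r).mul (cont_sqrt_delta r))))
          (fun θ => (mul_pos (by positivity : (0:ℝ) < r^2)
            (mul_pos (delta_pos hrsq θ) (Real.sqrt_pos.2 (delta_pos hrsq θ)))).ne')).intervalIntegrable _ _
    rw [hsplit] at hFTC
    have hE : (∫ θ in (0:ℝ)..(π/2), Real.sqrt (1 - r^2 * Real.sin θ ^2)) = E r := rfl
    rw [hE] at hFTC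
    field_simp at hFTC ⊢
    linarith
  · apply Continuous.intervalIntegrable
    exact ((cont_sqrt_delta r).div_const _).sub
      (continuous_const.div
        ((continuous_const.mul ((cont_delta r).mul (cont_sqrt_delta r))))
        (fun θ => (mul_pos (by positivity : (0:ℝ) < r^2)
          (mul_pos (delta_pos hrsq θ) (Real.sqrt_pos.2 (delta_pos hrsq θ)))).ne'))

lemma hasDerivAt_K' {r : ℝ} (hr : r ∈ Set.Ioo (0:ℝ) 1) :
    HasDerivAt K ((E r - (1 - r^2) * K r) / (r * (1 - r^2))) r := by
  obtain ⟨hr0, hr1⟩ := hr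
  have hrsq : r^2 < 1 := by nlinarith
  have hr2 : (1:ℝ) - r^2 ≠ 0 := by nlinarith
  have hrne : r ≠ 0 := ne_of_gt hr0
  have H := hasDerivAt_K_raw ⟨hr0, hr1⟩
  have heq : (∫ θ in (0:ℝ)..(π/2), r * Real.sin θ ^ 2 /
      ((1 - r^2 * Real.sin θ ^2) * Real.sqrt (1 - r^2 * Real.sin θ ^2)))
      = (E r - (1 - r^2) * K r) / (r * (1 - r^2)) := by
    have hpt : ∀ θ ∈ Set.uIcc (0:ℝ) (π/2),
        r * Real.sin θ ^ 2 / ((1 - r^2 * Real.sin θ ^2) * Real.sqrt (1 - r^2 * Real.sin θ ^2))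
        = (1/r) * (1 / ((1 - r^2 * Real.sin θ ^2) * Real.sqrt (1 - r^2 * Real.sin θ ^2)))
          - (1/r) * (1 / Real.sqrt (1 - r^2 * Real.sin θ ^2)) := by
      intro θ _
      have hΔ : 0 < 1 - r^2 * Real.sin θ ^2 := delta_pos hrsq θ
      have hq : 0 < Real.sqrt (1 - r^2 * Real.sin θ ^2) := Real.sqrt_pos.2 hΔ
      have hq2 : Real.sqrt (1 - r^2 * Real.sin θ ^2) ^ 2 = 1 - r^2 * Real.sin θ ^2 :=
        Real.sq_sqrt hΔ.le
      field_simp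
      ring
    rw [intervalIntegral.integral_congr hpt, intervalIntegral.integral_sub
      (((cont_d32 hrsq).intervalIntegrable _ _).const_mul _)
      (((cont_inv_sqrt_delta hrsq).intervalIntegrable _ _).const_mul _),
      intervalIntegral.integral_const_mul, intervalIntegral.integral_const_mul,
      integral_d32 ⟨hr0, hr1⟩]
    have hK : (∫ θ in (0:ℝ)..(π/2), 1 / Real.sqrt (1 - r^2 * Real.sin θ ^2)) = K r := rfl
    rw [hK]
    field_simp
  rwa [heq] at H

lemma hasDerivAt_E' {r : ℝ} (hr : r ∈ Set.Ioo (0:ℝ) 1) :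
    HasDerivAt E ((E r - K r) / r) r := by
  obtain ⟨hr0, hr1⟩ := hr
  have hrsq : r^2 < 1 := by nlinarith
  have hrne : r ≠ 0 := ne_of_gt hr0
  have H := hasDerivAt_E_raw ⟨hr0, hr1⟩
  have heq : (∫ θ in (0:ℝ)..(π/2),
      -(r * Real.sin θ ^ 2) / Real.sqrt (1 - r^2 * Real.sin θ ^2)) = (E r - K r) / r := by
    have hpt : ∀ θ ∈ Set.uIcc (0:ℝ) (π/2),
        -(r * Real.sin θ ^ 2) / Real.sqrt (1 - r^2 * Real.sin θ ^2)
        = (1/r) * Real.sqrt (1 - r^2 * Real.sin θ ^2)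
          - (1/r) * (1 / Real.sqrt (1 - r^2 * Real.sin θ ^2)) := by
      intro θ _
      have hΔ : 0 < 1 - r^2 * Real.sin θ ^2 := delta_pos hrsq θ
      have hq : 0 < Real.sqrt (1 - r^2 * Real.sin θ ^2) := Real.sqrt_pos.2 hΔ
      have hq2 : Real.sqrt (1 - r^2 * Real.sin θ ^2) ^ 2 = 1 - r^2 * Real.sin θ ^2 :=
        Real.sq_sqrt hΔ.le
      field_simp
      linear_combination -hq2
    rw [intervalIntegral.integral_congr hpt, intervalIntegral.integral_sub
      (((cont_sqrt_delta r).intervalIntegrable _ _).const_mul _)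
      (((cont_inv_sqrt_delta hrsq).intervalIntegrable _ _).const_mul _),
      intervalIntegral.integral_const_mul, intervalIntegral.integral_const_mul]
    have hK : (∫ θ in (0:ℝ)..(π/2), 1 / Real.sqrt (1 - r^2 * Real.sin θ ^2)) = K r := rfl
    have hE : (∫ θ in (0:ℝ)..(π/2), Real.sqrt (1 - r^2 * Real.sin θ ^2)) = E r := rfl
    rw [hK, hE]
    field_simp
  rwa [heq] at H

lemma sqrt_one_sub_sq_mem {r : ℝ} (hr : r ∈ Set.Ioo (0:ℝ) 1) :
    Real.sqrt (1 - r^2) ∈ Set.Ioo (0:ℝ) 1 := by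
  obtain ⟨hr0, hr1⟩ := hr
  constructor
  · exact Real.sqrt_pos.2 (by nlinarith)
  · have := Real.sqrt_lt_sqrt (by nlinarith : (0:ℝ) ≤ 1 - r^2) (by nlinarith : 1 - r^2 < 1)
    simpa using this

lemma hasDerivAt_sqrt_one_sub_sq {r : ℝ} (hr : r ∈ Set.Ioo (0:ℝ) 1) :
    HasDerivAt (fun x : ℝ => Real.sqrt (1 - x^2)) (-r / Real.sqrt (1 - r^2)) r := by
  obtain ⟨hr0, hr1⟩ := hr
  have h : (0:ℝ) < 1 - r^2 := by nlinarith
  have hu : HasDerivAt (fun x : ℝ => 1 - x^2) (-(2*r)) r := by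
    simpa using (hasDerivAt_pow 2 r).const_sub 1
  have := hu.sqrt h.ne'
  convert this using 1
  have hs : Real.sqrt (1 - r^2) ≠ 0 := (Real.sqrt_pos.2 h).ne'
  field_simp

lemma compl_K_hasDerivAt {r : ℝ} (hr : r ∈ Set.Ioo (0:ℝ) 1) :
    HasDerivAt K' (-(E' r - r^2 * K' r) / (r * (1 - r^2))) r := by
  obtain ⟨hr0, hr1⟩ := hr
  have h2 : (0:ℝ) < 1 - r^2 := by nlinarith
  set s := Real.sqrt (1 - r^2) with hsdef
  have hsmem : s ∈ Set.Ioo (0:ℝ) 1 := sqrt_one_sub_sq_mem ⟨hr0, hr1⟩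
  have hs0 : 0 < s := hsmem.1
  have hs2 : s^2 = 1 - r^2 := Real.sq_sqrt h2.le
  have houter := hasDerivAt_K' hsmem
  have hinner := hasDerivAt_sqrt_one_sub_sq ⟨hr0, hr1⟩
  have H := houter.comp r hinner
  have hKfun : (K ∘ fun x : ℝ => Real.sqrt (1 - x^2)) = K' := rfl
  rw [hKfun] at H
  refine H.congr_deriv ?_
  symm
  show -(E' r - r^2 * K' r) / (r * (1 - r^2))
      = (E s - (1 - s^2) * K s) / (s * (1 - s^2)) * (-r / s)
  have hE' : E s = E' r := rfl
  have hK' : K s = K' r := rfl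
  rw [hE', hK', hs2]
  have h1s : (1:ℝ) - (1 - r^2) = r^2 := by ring
  rw [h1s]
  field_simp
  linear_combination (-E' r + r^2 * K' r) * hs2

lemma compl_E_hasDerivAt {r : ℝ} (hr : r ∈ Set.Ioo (0:ℝ) 1) :
    HasDerivAt E' (-(r * (E' r - K' r)) / (1 - r^2)) r := by
  obtain ⟨hr0, hr1⟩ := hr
  have h2 : (0:ℝ) < 1 - r^2 := by nlinarith
  set s := Real.sqrt (1 - r^2) with hsdef
  have hsmem : s ∈ Set.Ioo (0:ℝ) 1 := sqrt_one_sub_sq_mem ⟨hr0, hr1⟩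
  have hs0 : 0 < s := hsmem.1
  have hs2 : s^2 = 1 - r^2 := Real.sq_sqrt h2.le
  have houter := hasDerivAt_E' hsmem
  have hinner := hasDerivAt_sqrt_one_sub_sq ⟨hr0, hr1⟩
  have H := houter.comp r hinner
  have hEfun : (E ∘ fun x : ℝ => Real.sqrt (1 - x^2)) = E' := rfl
  rw [hEfun] at H
  refine H.congr_deriv ?_
  symm
  show -(r * (E' r - K' r)) / (1 - r^2) = (E s - K s) / s * (-r / s)
  have hE' : E s = E' r := rfl
  have hK' : K s = K' r := rfl
  rw [hE', hK']
  field_simp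
  linear_combination (-E' r + K' r) * hs2

lemma K_lower {r : ℝ} (hr : r ∈ Set.Ioo (0:ℝ) 1) : π/2 ≤ K r := by
  obtain ⟨hr0, hr1⟩ := hr
  have hrsq : r^2 < 1 := by nlinarith
  have hpi : (0:ℝ) ≤ π/2 := by positivity
  have h := intervalIntegral.integral_mono_on (a := 0) (b := π/2) (μ := volume)
    (f := fun _ => (1:ℝ))
    (g := fun θ => 1 / Real.sqrt (1 - r^2 * Real.sin θ ^2)) hpi
    intervalIntegrable_const ((cont_inv_sqrt_delta hrsq).intervalIntegrable _ _)
    (fun θ _ => ?_)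
  · simpa [K, one_div] using h
  · have hΔ := delta_pos hrsq θ
    have hq : 0 < Real.sqrt (1 - r^2 * Real.sin θ ^2) := Real.sqrt_pos.2 hΔ
    rw [le_div_iff₀ hq, one_mul]
    calc Real.sqrt (1 - r^2 * Real.sin θ ^2) ≤ Real.sqrt 1 :=
          Real.sqrt_le_sqrt (by nlinarith [sq_nonneg (r * Real.sin θ)])
      _ = 1 := Real.sqrt_one

lemma K_upper {r : ℝ} (hr : r ∈ Set.Ioo (0:ℝ) 1) : K r ≤ (π/2) / Real.sqrt (1 - r^2) := by
  obtain ⟨hr0, hr1⟩ := hr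
  have hrsq : r^2 < 1 := by nlinarith
  have h2 : (0:ℝ) < 1 - r^2 := by nlinarith
  have hs : 0 < Real.sqrt (1 - r^2) := Real.sqrt_pos.2 h2
  have hpi : (0:ℝ) ≤ π/2 := by positivity
  have h := intervalIntegral.integral_mono_on (a := 0) (b := π/2) (μ := volume)
    (f := fun θ => 1 / Real.sqrt (1 - r^2 * Real.sin θ ^2))
    (g := fun _ => 1 / Real.sqrt (1 - r^2)) hpi
    ((cont_inv_sqrt_delta hrsq).intervalIntegrable _ _) intervalIntegrable_const
    (fun θ _ => ?_)
  · rw [div_eq_mul_inv]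
    simpa [K, one_div] using h
  · exact one_div_le_one_div_of_le hs (Real.sqrt_le_sqrt (delta_ge r θ))

lemma E_le_K {r : ℝ} (hr : r ∈ Set.Ioo (0:ℝ) 1) : E r ≤ K r := by
  obtain ⟨hr0, hr1⟩ := hr
  have hrsq : r^2 < 1 := by nlinarith
  have hpi : (0:ℝ) ≤ π/2 := by positivity
  exact intervalIntegral.integral_mono_on hpi
    ((cont_sqrt_delta r).intervalIntegrable _ _)
    ((cont_inv_sqrt_delta hrsq).intervalIntegrable _ _)
    (fun θ _ => by
      have hΔ := delta_pos hrsq θ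
      have hq : 0 < Real.sqrt (1 - r^2 * Real.sin θ ^2) := Real.sqrt_pos.2 hΔ
      rw [le_div_iff₀ hq]
      calc Real.sqrt (1 - r^2 * Real.sin θ ^2) * Real.sqrt (1 - r^2 * Real.sin θ ^2)
          = 1 - r^2 * Real.sin θ ^2 := Real.mul_self_sqrt hΔ.le
        _ ≤ 1 := by nlinarith [sq_nonneg (r * Real.sin θ)])

lemma K_sub_E_le {r : ℝ} (hr : r ∈ Set.Ioo (0:ℝ) 1) :
    K r - E r ≤ (π/2) * r^2 / Real.sqrt (1 - r^2) := by
  obtain ⟨hr0, hr1⟩ := hr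
  have hrsq : r^2 < 1 := by nlinarith
  have h2 : (0:ℝ) < 1 - r^2 := by nlinarith
  have hs : 0 < Real.sqrt (1 - r^2) := Real.sqrt_pos.2 h2
  have hpi : (0:ℝ) ≤ π/2 := by positivity
  have hsub : K r - E r = ∫ θ in (0:ℝ)..(π/2),
      (1 / Real.sqrt (1 - r^2 * Real.sin θ ^2) - Real.sqrt (1 - r^2 * Real.sin θ ^2)) := by
    rw [intervalIntegral.integral_sub ((cont_inv_sqrt_delta hrsq).intervalIntegrable _ _)
      ((cont_sqrt_delta r).intervalIntegrable _ _)]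
    rfl
  rw [hsub]
  have h := intervalIntegral.integral_mono_on (a := 0) (b := π/2) (μ := volume)
    (f := fun θ => 1 / Real.sqrt (1 - r^2 * Real.sin θ ^2) - Real.sqrt (1 - r^2 * Real.sin θ ^2))
    (g := fun _ => r^2 / Real.sqrt (1 - r^2)) hpi
    (((cont_inv_sqrt_delta hrsq).sub (cont_sqrt_delta r)).intervalIntegrable _ _)
    intervalIntegrable_const (fun θ _ => ?_)
  · refine le_trans h ?_
    rw [intervalIntegral.integral_const, smul_eq_mul]
    ring_nf
    apply le_of_eq
    ring
  · show 1 / Real.sqrt (1 - r^2 * Real.sin θ ^2) - Real.sqrt (1 - r^2 * Real.sin θ ^2)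
        ≤ r^2 / Real.sqrt (1 - r^2)
    have hΔ := delta_pos hrsq θ
    have hq : 0 < Real.sqrt (1 - r^2 * Real.sin θ ^2) := Real.sqrt_pos.2 hΔ
    have hq2 : Real.sqrt (1 - r^2 * Real.sin θ ^2) ^ 2 = 1 - r^2 * Real.sin θ ^2 :=
      Real.sq_sqrt hΔ.le
    have heq : 1 / Real.sqrt (1 - r^2 * Real.sin θ ^2) - Real.sqrt (1 - r^2 * Real.sin θ ^2)
        = r^2 * Real.sin θ ^2 / Real.sqrt (1 - r^2 * Real.sin θ ^2) := by
      field_simp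
      rw [hq2]; ring
    rw [heq]
    apply div_le_div₀ (by positivity)
      (by nlinarith [Real.sin_sq_le_one θ, sq_nonneg r] : r^2 * Real.sin θ ^2 ≤ r^2) hs
      (Real.sqrt_le_sqrt (delta_ge r θ))

lemma E_ge_one {r : ℝ} (hr : r ∈ Set.Ioo (0:ℝ) 1) : 1 ≤ E r := by
  obtain ⟨hr0, hr1⟩ := hr
  have hrsq : r^2 < 1 := by nlinarith
  have hpi : (0:ℝ) ≤ π/2 := by positivity
  have h := intervalIntegral.integral_mono_on (a := 0) (b := π/2) (μ := volume)
    (f := fun θ => Real.cos θ)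
    (g := fun θ => Real.sqrt (1 - r^2 * Real.sin θ ^2)) hpi
    (Real.continuous_cos.intervalIntegrable _ _)
    ((cont_sqrt_delta r).intervalIntegrable _ _) (fun θ _ => ?_)
  · rw [integral_cos] at h
    simpa [E] using h
  · calc Real.cos θ ≤ |Real.cos θ| := le_abs_self _
      _ = Real.sqrt (Real.cos θ ^2) := (Real.sqrt_sq_eq_abs _).symm
      _ ≤ Real.sqrt (1 - r^2 * Real.sin θ ^2) := by
          apply Real.sqrt_le_sqrt
          have := Real.sin_sq_add_cos_sq θ
          nlinarith [Real.sin_sq_le_one θ, sq_nonneg (Real.sin θ), sq_nonneg r]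

lemma E_le_one_add {r : ℝ} (hr : r ∈ Set.Ioo (0:ℝ) 1) :
    E r ≤ 1 + (π/2) * Real.sqrt (1 - r^2) := by
  obtain ⟨hr0, hr1⟩ := hr
  have hrsq : r^2 < 1 := by nlinarith
  have h2 : (0:ℝ) < 1 - r^2 := by nlinarith
  have hpi : (0:ℝ) ≤ π/2 := by positivity
  have h := intervalIntegral.integral_mono_on (a := 0) (b := π/2) (μ := volume)
    (f := fun θ => Real.sqrt (1 - r^2 * Real.sin θ ^2))
    (g := fun θ => Real.cos θ + Real.sqrt (1 - r^2)) hpi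
    ((cont_sqrt_delta r).intervalIntegrable _ _)
    ((Real.continuous_cos.add continuous_const).intervalIntegrable _ _) (fun θ hθ => ?_)
  · rw [intervalIntegral.integral_add (Real.continuous_cos.intervalIntegrable _ _)
      intervalIntegrable_const, integral_cos] at h
    simp only [Real.sin_pi_div_two, Real.sin_zero, intervalIntegral.integral_const,
      smul_eq_mul] at h
    calc E r ≤ 1 - 0 + (π/2 - 0) * Real.sqrt (1 - r^2) := h
      _ = 1 + (π/2) * Real.sqrt (1 - r^2) := by ring
  · have hcos : 0 ≤ Real.cos θ := by
      apply Real.cos_nonneg_of_mem_Icc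
      constructor
      · linarith [hθ.1, Real.pi_pos]
      · exact hθ.2
    have hkey : 1 - r^2 * Real.sin θ ^2 ≤ (Real.cos θ + Real.sqrt (1 - r^2))^2 := by
      have hsq : Real.sqrt (1 - r^2) ^ 2 = 1 - r^2 := Real.sq_sqrt h2.le
      have hc := Real.sin_sq_add_cos_sq θ
      nlinarith [mul_nonneg hcos (Real.sqrt_nonneg (1 - r^2)), Real.sin_sq_le_one θ,
        sq_nonneg (Real.sin θ), sq_nonneg r]
    calc Real.sqrt (1 - r^2 * Real.sin θ ^2)
        ≤ Real.sqrt ((Real.cos θ + Real.sqrt (1 - r^2))^2) := Real.sqrt_le_sqrt hkey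
      _ = Real.cos θ + Real.sqrt (1 - r^2) := Real.sqrt_sq (by positivity)

noncomputable def W (r : ℝ) : ℝ := E r * K' r + E' r * K r - K r * K' r

lemma W_hasDerivAt {r : ℝ} (hr : r ∈ Set.Ioo (0:ℝ) 1) : HasDerivAt W 0 r := by
  obtain ⟨hr0, hr1⟩ := hr
  have h2 : (0:ℝ) < 1 - r^2 := by nlinarith
  have hE := hasDerivAt_E' ⟨hr0, hr1⟩
  have hK := hasDerivAt_K' ⟨hr0, hr1⟩
  have hK'd := compl_K_hasDerivAt ⟨hr0, hr1⟩
  have hE'd := compl_E_hasDerivAt ⟨hr0, hr1⟩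
  have H := ((hE.mul hK'd).add (hE'd.mul hK)).sub (hK.mul hK'd)
  have hWeq : W = fun r => E r * K' r + E' r * K r - K r * K' r := rfl
  rw [hWeq]
  refine H.congr_deriv ?_
  symm
  have hrne : r ≠ 0 := ne_of_gt hr0
  field_simp
  ring

lemma W_eq_W {a b : ℝ} (ha : a ∈ Set.Ioo (0:ℝ) 1) (hb : b ∈ Set.Ioo (0:ℝ) 1)
    (hab : a ≤ b) : W b = W a := by
  have hsub : Set.Icc a b ⊆ Set.Ioo (0:ℝ) 1 := fun x hx =>
    ⟨lt_of_lt_of_le ha.1 hx.1, lt_of_le_of_lt hx.2 hb.2⟩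
  have hcont : ContinuousOn W (Set.Icc a b) := fun x hx =>
    ((W_hasDerivAt (hsub hx)).continuousAt).continuousWithinAt
  have hderiv : ∀ x ∈ Set.Ico a b, HasDerivWithinAt W 0 (Set.Ici x) x := fun x hx =>
    (W_hasDerivAt (hsub ⟨hx.1, hx.2.le⟩)).hasDerivWithinAt
  exact constant_of_has_deriv_right_zero hcont hderiv b (Set.right_mem_Icc.2 hab)

lemma W_tendsto : Tendsto W (𝓝[>] (0:ℝ)) (𝓝 (π/2)) := by
  have hmem : Set.Ioo (0:ℝ) 1 ∈ 𝓝[>] (0:ℝ) := Ioo_mem_nhdsGT_of_mem (by norm_num : (0:ℝ) ∈ Set.Ico (0:ℝ) 1)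
  have hL : Tendsto (fun r : ℝ => π/2 - (π^2/4) * r / Real.sqrt (1 - r^2)) (𝓝[>] (0:ℝ))
      (𝓝 (π/2)) := by
    have : Tendsto (fun r : ℝ => π/2 - (π^2/4) * r / Real.sqrt (1 - r^2)) (𝓝 (0:ℝ))
        (𝓝 (π/2 - (π^2/4) * 0 / Real.sqrt (1 - 0^2))) := by
      apply Tendsto.sub tendsto_const_nhds
      apply Tendsto.div ((tendsto_const_nhds).mul tendsto_id)
      · exact ((continuous_const.sub (continuous_pow 2)).sqrt).continuousAt.tendsto
      · simp
    simp only [mul_zero, zero_div, sub_zero] at this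
    exact this.mono_left nhdsWithin_le_nhds
  have hU : Tendsto (fun r : ℝ => (1 + (π/2) * r) * ((π/2) / Real.sqrt (1 - r^2)))
      (𝓝[>] (0:ℝ)) (𝓝 (π/2)) := by
    have : Tendsto (fun r : ℝ => (1 + (π/2) * r) * ((π/2) / Real.sqrt (1 - r^2))) (𝓝 (0:ℝ))
        (𝓝 ((1 + (π/2) * 0) * ((π/2) / Real.sqrt (1 - 0^2)))) := by
      apply Tendsto.mul
      · exact (continuous_const.add (continuous_const.mul continuous_id)).continuousAt.tendsto
      · apply Tendsto.div tendsto_const_nhds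
          ((continuous_const.sub (continuous_pow 2)).sqrt).continuousAt.tendsto
        simp
    simp only [mul_zero, add_zero] at this
    convert this.mono_left nhdsWithin_le_nhds using 2
    simp
  apply tendsto_of_tendsto_of_tendsto_of_le_of_le' hL hU
  · filter_upwards [hmem] with r hr
    -- lower bound
    obtain ⟨hr0, hr1⟩ := hr
    have h2 : (0:ℝ) < 1 - r^2 := by nlinarith
    have hsmem := sqrt_one_sub_sq_mem ⟨hr0, hr1⟩
    have hKp : 0 ≤ K' r := le_trans (by positivity) (K_lower hsmem)
    have hKE : 0 ≤ K r - E r := by linarith [E_le_K ⟨hr0, hr1⟩]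
    have hK'up : K' r ≤ (π/2) / r := by
      have := K_upper hsmem
      unfold K'
      convert this using 2
      rw [Real.sq_sqrt h2.le]
      rw [show (1:ℝ) - (1 - r^2) = r^2 by ring, Real.sqrt_sq hr0.le]
    have hKEup : K r - E r ≤ (π/2) * r^2 / Real.sqrt (1 - r^2) := K_sub_E_le ⟨hr0, hr1⟩
    have hprod : K' r * (K r - E r) ≤ (π^2/4) * r / Real.sqrt (1 - r^2) := by
      calc K' r * (K r - E r) ≤ ((π/2)/r) * ((π/2) * r^2 / Real.sqrt (1 - r^2)) :=
            mul_le_mul hK'up hKEup hKE (by positivity)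
        _ = (π^2/4) * r / Real.sqrt (1 - r^2) := by
            field_simp
            ring
    have hE'K : 1 * (π/2) ≤ E' r * K r := by
      apply mul_le_mul (E_ge_one hsmem) (K_lower ⟨hr0, hr1⟩) (by positivity)
      linarith [E_ge_one hsmem]
    have hWeq : W r = E' r * K r - K' r * (K r - E r) := by unfold W; ring
    rw [hWeq]
    linarith
  · filter_upwards [hmem] with r hr
    obtain ⟨hr0, hr1⟩ := hr
    have h2 : (0:ℝ) < 1 - r^2 := by nlinarith
    have hsmem := sqrt_one_sub_sq_mem ⟨hr0, hr1⟩
    have hKp : 0 ≤ K' r := le_trans (by positivity) (K_lower hsmem)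
    have hKE : 0 ≤ K r - E r := by linarith [E_le_K ⟨hr0, hr1⟩]
    have hE'up : E' r ≤ 1 + (π/2) * r := by
      have := E_le_one_add hsmem
      unfold E'
      convert this using 3
      rw [Real.sq_sqrt h2.le]
      rw [show (1:ℝ) - (1 - r^2) = r^2 by ring, Real.sqrt_sq hr0.le]
    have hKup := K_upper ⟨hr0, hr1⟩
    have hWeq : W r = E' r * K r - K' r * (K r - E r) := by unfold W; ring
    rw [hWeq]
    have hKnn : 0 ≤ K r := le_trans (by positivity) (K_lower ⟨hr0, hr1⟩)
    have h1 : E' r * K r ≤ (1 + (π/2) * r) * ((π/2) / Real.sqrt (1 - r^2)) := by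
      apply mul_le_mul hE'up hKup hKnn
      positivity
    nlinarith [mul_nonneg hKp hKE]

lemma legendre {r : ℝ} (hr : r ∈ Set.Ioo (0:ℝ) 1) :
    E r * K' r + E' r * K r - K r * K' r = π/2 := by
  have hconst : W =ᶠ[𝓝[>] (0:ℝ)] fun _ => W r := by
    filter_upwards [Ioo_mem_nhdsGT_of_mem
      (by exact ⟨le_refl _, hr.1⟩ : (0:ℝ) ∈ Set.Ico (0:ℝ) r)] with x hx
    exact (W_eq_W ⟨hx.1, lt_trans hx.2 hr.2⟩ hr hx.2.le).symm
  have h1 : Tendsto W (𝓝[>] (0:ℝ)) (𝓝 (W r)) := by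
    rw [tendsto_congr' hconst]
    exact tendsto_const_nhds
  have := tendsto_nhds_unique h1 W_tendsto
  unfold W at this
  exact this

theorem stmt_6 :
    ∀ r ∈ Set.Ioo (0:ℝ) 1, HasDerivAt m ((π - 4 * E' r * K r) / (π * r)) r := by
  intro r hr
  obtain ⟨hr0, hr1⟩ := hr
  have h2 : (0:ℝ) < 1 - r^2 := by nlinarith
  have hrne : r ≠ 0 := ne_of_gt hr0
  have hπ : (π:ℝ) ≠ 0 := Real.pi_ne_zero
  have hK := hasDerivAt_K' ⟨hr0, hr1⟩
  have hK'd := compl_K_hasDerivAt ⟨hr0, hr1⟩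
  have hsq : HasDerivAt (fun x : ℝ => (2/π) * (1 - x^2)) ((2/π) * (-(2*r))) r := by
    have : HasDerivAt (fun x : ℝ => 1 - x^2) (-(2*r)) r := by
      simpa using (hasDerivAt_pow 2 r).const_sub 1
    exact this.const_mul _
  have H := ((hsq.mul hK).mul hK'd)
  have hmeq : m = fun x => (2/π) * (1 - x^2) * K x * K' x := rfl
  rw [hmeq]
  refine H.congr_deriv ?_
  symm
  simp only [Pi.mul_apply]
  have hleg := legendre ⟨hr0, hr1⟩
  have hX : ((2 / π * -(2 * r) * K r + 2 / π * (1 - r ^ 2) * ((E r - (1 - r ^ 2) * K r) / (r * (1 - r ^ 2)))) * K' r +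
        2 / π * (1 - r ^ 2) * K r * (-(E' r - r ^ 2 * K' r) / (r * (1 - r ^ 2))))
      = 2*(E r * K' r - E' r * K r - K r * K' r)/(π*r) := by
    field_simp
    ring
  rw [hX, show 2*(E r * K' r - E' r * K r - K r * K' r) = π - 4 * E' r * K r from by linarith]
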